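/- (Proposition 1, value form.) Let X and Y be real N×d matrices. Then the minimum of ‖XW − PY‖_F² over all N×N permutation matrices P and all d×d orthogonal matrices W equals ‖X‖_F² + ‖Y‖_F² − 2·max_{P} ‖Xᵀ P Y‖_*, where the maximum is over all N×N permutation matrices P. -/

import Mathlib

open Matrix

/-- `P` is a permutation matrix: the matrix of some permutation of the index set. -/
def IsPermMatrix {N : ℕ} (P : Matrix (Fin N) (Fin N) ℝ) : Prop :=
  ∃ σ : Equiv.Perm (Fin N), P = σ.permMatrix ℝ

/-- Squared Frobenius norm: `‖A‖_F² = Tr (Aᵀ A)`. -/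
def frobSq {m n : ℕ} (A : Matrix (Fin m) (Fin n) ℝ) : ℝ := (Aᵀ * A).trace

/-- Nuclear (trace) norm: `‖A‖_* = Tr √(AᵀA)`, where `√` is the PSD square root. -/
noncomputable def nuclearNorm {m n : ℕ} (A : Matrix (Fin m) (Fin n) ℝ) : ℝ :=
  ((Matrix.posSemidef_conjTranspose_mul_self A).1.eigenvectorUnitary.1 *
    diagonal ((RCLike.ofReal : ℝ → ℝ) ∘ (√·) ∘ (Matrix.posSemidef_conjTranspose_mul_self A).1.eigenvalues) *
    (star (Matrix.posSemidef_conjTranspose_mul_self A).1.eigenvectorUnitary :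
      Matrix (Fin n) (Fin n) ℝ)).trace

/-- The PSD square root of `AᵀA` used in `nuclearNorm`. -/
noncomputable def sqrtM {m n : ℕ} (A : Matrix (Fin m) (Fin n) ℝ) : Matrix (Fin n) (Fin n) ℝ :=
  (Matrix.posSemidef_conjTranspose_mul_self A).1.eigenvectorUnitary.1 *
    diagonal ((RCLike.ofReal : ℝ → ℝ) ∘ (√·) ∘ (Matrix.posSemidef_conjTranspose_mul_self A).1.eigenvalues) *
    (star (Matrix.posSemidef_conjTranspose_mul_self A).1.eigenvectorUnitary :
      Matrix (Fin n) (Fin n) ℝ)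

lemma sqrtM_posSemidef {m n : ℕ} (A : Matrix (Fin m) (Fin n) ℝ) : (sqrtM A).PosSemidef := by
  have hD : (diagonal ((RCLike.ofReal : ℝ → ℝ) ∘ (√·) ∘
      (Matrix.posSemidef_conjTranspose_mul_self A).1.eigenvalues)).PosSemidef :=
    Matrix.posSemidef_diagonal_iff.mpr fun i => Real.sqrt_nonneg _
  have := hD.mul_mul_conjTranspose_same
    ((Matrix.posSemidef_conjTranspose_mul_self A).1.eigenvectorUnitary.1)
  simpa [sqrtM, Matrix.star_eq_conjTranspose] using this

lemma sqrtM_mul_self {m n : ℕ} (A : Matrix (Fin m) (Fin n) ℝ) : sqrtM A * sqrtM A = Aᴴ * A := by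
  have hps := Matrix.posSemidef_conjTranspose_mul_self A
  set V : Matrix (Fin n) (Fin n) ℝ := hps.1.eigenvectorUnitary.1 with hV
  have hVu : star V * V = 1 := by simp [hV]
  have hspec : Aᴴ * A = V * diagonal (RCLike.ofReal ∘ hps.1.eigenvalues) * star V := by
    have := hps.1.spectral_theorem
    rw [Unitary.conjStarAlgAut_apply] at this
    exact this
  have hD : diagonal ((RCLike.ofReal : ℝ → ℝ) ∘ (√·) ∘ hps.1.eigenvalues) *
      diagonal ((RCLike.ofReal : ℝ → ℝ) ∘ (√·) ∘ hps.1.eigenvalues)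
      = diagonal (RCLike.ofReal ∘ hps.1.eigenvalues) := by
    rw [Matrix.diagonal_mul_diagonal]
    congr 1
    funext i
    simp
    exact Real.mul_self_sqrt (hps.eigenvalues_nonneg i)
  rw [hspec, sqrtM, ← hD]
  calc V * diagonal ((RCLike.ofReal : ℝ → ℝ) ∘ (√·) ∘ hps.1.eigenvalues) * star V *
        (V * diagonal ((RCLike.ofReal : ℝ → ℝ) ∘ (√·) ∘ hps.1.eigenvalues) * star V)
      = V * diagonal ((RCLike.ofReal : ℝ → ℝ) ∘ (√·) ∘ hps.1.eigenvalues) * (star V * V) *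
        diagonal ((RCLike.ofReal : ℝ → ℝ) ∘ (√·) ∘ hps.1.eigenvalues) * star V := by noncomm_ring
    _ = _ := by rw [hVu, Matrix.mul_one]; noncomm_ring


lemma toEuclideanLin_mul {d : ℕ} (M N : Matrix (Fin d) (Fin d) ℝ) :
    Matrix.toEuclideanLin (M * N) =
      (Matrix.toEuclideanLin M).comp (Matrix.toEuclideanLin N) := by
  ext x
  simp [Matrix.toEuclideanLin_apply, Matrix.mulVec_mulVec]

lemma exists_polar {d : ℕ} (A : Matrix (Fin d) (Fin d) ℝ) :
    ∃ W : Matrix (Fin d) (Fin d) ℝ, Wᵀ * W = 1 ∧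
      A = W * sqrtM A := by
  set S : Matrix (Fin d) (Fin d) ℝ := sqrtM A with hS
  have hSps : S.PosSemidef := sqrtM_posSemidef A
  have hSsq : S * S = Aᴴ * A := sqrtM_mul_self A
  have hSherm : Sᴴ = S := hSps.1
  set f : EuclideanSpace ℝ (Fin d) →ₗ[ℝ] EuclideanSpace ℝ (Fin d) := Matrix.toEuclideanLin A with hf
  set g : EuclideanSpace ℝ (Fin d) →ₗ[ℝ] EuclideanSpace ℝ (Fin d) := Matrix.toEuclideanLin S with hg
  have hinner : ∀ x : EuclideanSpace ℝ (Fin d), ‖f x‖ = ‖g x‖ := by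
    intro x
    have h1 : inner ℝ (f x) (f x) = inner ℝ (g x) (g x) := by
      have hf' : inner ℝ (f x) (f x) = inner ℝ x (Matrix.toEuclideanLin (Aᴴ * A) x) := by
        rw [toEuclideanLin_mul, Matrix.toEuclideanLin_conjTranspose_eq_adjoint]
        simp only [LinearMap.comp_apply]
        rw [LinearMap.adjoint_inner_right]
      have hg' : inner ℝ (g x) (g x) = inner ℝ x (Matrix.toEuclideanLin (S * S) x) := by
        conv_lhs => rw [show inner ℝ (g x) (g x) = inner ℝ (Matrix.toEuclideanLin Sᴴ (g x)) x from by
          rw [Matrix.toEuclideanLin_conjTranspose_eq_adjoint, LinearMap.adjoint_inner_left]]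
        rw [hSherm, real_inner_comm, toEuclideanLin_mul]
        simp only [LinearMap.comp_apply]
        rfl
      rw [hf', hg', hSsq]
    have h2 : ‖f x‖ ^ 2 = ‖g x‖ ^ 2 := by
      rw [← real_inner_self_eq_norm_sq, ← real_inner_self_eq_norm_sq]; exact h1
    nlinarith [norm_nonneg (f x), norm_nonneg (g x)]
  have hker : LinearMap.ker g ≤ LinearMap.ker f := by
    intro x hx
    simp only [LinearMap.mem_ker] at hx ⊢
    have := hinner x
    rw [hx, norm_zero] at this
    exact norm_eq_zero.mp this
  let e := g.quotKerEquivRange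
  let fbar : (EuclideanSpace ℝ (Fin d) ⧸ LinearMap.ker g) →ₗ[ℝ] EuclideanSpace ℝ (Fin d) :=
    (LinearMap.ker g).liftQ f hker
  let h0 : LinearMap.range g →ₗ[ℝ] EuclideanSpace ℝ (Fin d) := fbar.comp (e.symm : _ →ₗ[ℝ] _)
  have h0_apply : ∀ x : EuclideanSpace ℝ (Fin d),
      h0 ⟨g x, LinearMap.mem_range_self g x⟩ = f x := by
    intro x
    have h1 : e.symm ⟨g x, LinearMap.mem_range_self g x⟩ = (LinearMap.ker g).mkQ x :=
      g.quotKerEquivRange_symm_apply_image x (LinearMap.mem_range_self g x)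
    simp only [h0, LinearMap.comp_apply, LinearEquiv.coe_coe, h1]
    simp [fbar]
  have hnorm : ∀ y : LinearMap.range g, ‖h0 y‖ = ‖y‖ := by
    rintro ⟨y, x, rfl⟩
    rw [h0_apply x, hinner x]
    rfl
  let L : (LinearMap.range g) →ₗᵢ[ℝ] EuclideanSpace ℝ (Fin d) := ⟨h0, hnorm⟩
  let U := L.extend
  set W : Matrix (Fin d) (Fin d) ℝ := Matrix.toEuclideanLin.symm U.toLinearMap with hW
  have hWU : Matrix.toEuclideanLin W = U.toLinearMap := by simp [hW]
  have hcol : ∀ i k : Fin d, U (EuclideanSpace.single i (1:ℝ)) k = W k i := by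
    intro i k
    have := congrArg (fun (φ : EuclideanSpace ℝ (Fin d) →ₗ[ℝ] EuclideanSpace ℝ (Fin d)) =>
      φ (EuclideanSpace.single i 1) k) hWU
    simp only [LinearIsometry.coe_toLinearMap] at this
    rw [← this, Matrix.toEuclideanLin_apply]
    simp only [PiLp.ofLp_single]
    rw [Matrix.mulVec_single]
    simp
  refine ⟨W, ?_, ?_⟩
  · ext i j
    have hin : inner ℝ (U (EuclideanSpace.single i (1:ℝ))) (U (EuclideanSpace.single j 1))
        = inner ℝ (EuclideanSpace.single i (1:ℝ)) (EuclideanSpace.single j (1:ℝ)) :=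
      U.inner_map_map _ _
    have lhs : (Wᵀ * W) i j = ∑ k, W k i * W k j := by
      simp [Matrix.mul_apply, Matrix.transpose_apply]
    have hsum : ∑ k, W k i * W k j
        = inner ℝ (U (EuclideanSpace.single i (1:ℝ))) (U (EuclideanSpace.single j 1)) := by
      rw [PiLp.inner_apply]
      refine Finset.sum_congr rfl fun k _ => ?_
      rw [hcol i k, hcol j k]
      simp [RCLike.inner_apply]
      ring
    rw [lhs, hsum, hin, EuclideanSpace.inner_single_left]
    simp [EuclideanSpace.single_apply, Matrix.one_apply, eq_comm]
  · apply Matrix.toEuclideanLin.injective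
    rw [toEuclideanLin_mul, hWU]
    refine LinearMap.ext fun x => ?_
    have hUx : U (g x) = f x := by
      have h1 := L.extend_apply ⟨g x, LinearMap.mem_range_self g x⟩
      have h2 : L ⟨g x, LinearMap.mem_range_self g x⟩ = f x := h0_apply x
      rw [h2] at h1
      exact h1
    simpa using hUx.symm


lemma trace_orth_mul_psd_le {d : ℕ} {Q S : Matrix (Fin d) (Fin d) ℝ}
    (hQ : Qᵀ * Q = 1) (hS : S.PosSemidef) : (Q * S).trace ≤ S.trace := by
  have hH : S.IsHermitian := hS.1
  have hQs : star Q * Q = 1 := by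
    rwa [Matrix.star_eq_conjTranspose, Matrix.conjTranspose_eq_transpose_of_trivial]
  set V : Matrix (Fin d) (Fin d) ℝ := (hH.eigenvectorUnitary : Matrix (Fin d) (Fin d) ℝ) with hV
  have hVu : star V * V = 1 := by simp [hV]
  have hVu' : V * star V = 1 := by simp [hV]
  set lam : Fin d → ℝ := fun i => hH.eigenvalues i with hlam
  have hspec : S = V * Matrix.diagonal (RCLike.ofReal ∘ hH.eigenvalues) * star V :=
    by have := hH.spectral_theorem; rw [Unitary.conjStarAlgAut_apply] at this; exact this
  have hdiag : Matrix.diagonal (RCLike.ofReal ∘ hH.eigenvalues) = Matrix.diagonal lam := rfl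
  rw [hdiag] at hspec
  set R : Matrix (Fin d) (Fin d) ℝ := star V * Q * V with hR
  have hRo : star R * R = 1 := by
    have hsr : star R = star V * star Q * V := by
      simp [hR, Matrix.star_mul, Matrix.mul_assoc]
    rw [hsr, hR]
    calc star V * star Q * V * (star V * Q * V)
        = star V * star Q * (V * star V) * Q * V := by noncomm_ring
      _ = star V * (star Q * Q) * V := by rw [hVu']; noncomm_ring
      _ = 1 := by rw [hQs, Matrix.mul_one, hVu]
  have hRdiag : ∀ i, R i i ≤ 1 := by
    intro i
    have h1 : (star R * R) i i = 1 := by rw [hRo]; simp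
    have h2 : ∑ k, R k i ^ 2 = 1 := by
      rw [← h1, Matrix.mul_apply]
      refine Finset.sum_congr rfl fun k _ => ?_
      simp [Matrix.star_apply, sq]
    have h3 : R i i ^ 2 ≤ 1 := by
      rw [← h2]
      exact Finset.single_le_sum (f := fun k => R k i ^ 2)
        (fun k _ => sq_nonneg _) (Finset.mem_univ i)
    nlinarith
  have hltr : (Q * S).trace = ∑ i, R i i * lam i := by
    rw [hspec]
    have h4 : Q * (V * Matrix.diagonal lam * star V) = Q * V * Matrix.diagonal lam * star V := by
      noncomm_ring
    rw [h4, Matrix.trace_mul_cycle]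
    rw [show star V * (Q * V) = R from by rw [hR, Matrix.mul_assoc]]
    rw [Matrix.trace]
    refine Finset.sum_congr rfl fun i _ => ?_
    simp [Matrix.diag, Matrix.mul_diagonal]
  have htrS : S.trace = ∑ i, lam i := by
    rw [hspec, Matrix.trace_mul_cycle, hVu, Matrix.one_mul, Matrix.trace_diagonal]
  rw [hltr, htrS]
  refine Finset.sum_le_sum fun i _ => ?_
  have h5 := hS.eigenvalues_nonneg i
  have h6 := hRdiag i
  nlinarith

lemma trace_le_nuclearNorm {d : ℕ} (A W : Matrix (Fin d) (Fin d) ℝ) (hW : Wᵀ * W = 1) :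
    (Wᵀ * A).trace ≤ nuclearNorm A := by
  obtain ⟨U, hU, hA⟩ := exists_polar A
  set S := sqrtM A with hSdef
  have hSps : S.PosSemidef := sqrtM_posSemidef A
  have hQ : (Wᵀ * U)ᵀ * (Wᵀ * U) = 1 := by
    rw [Matrix.transpose_mul, Matrix.transpose_transpose]
    calc Uᵀ * W * (Wᵀ * U) = Uᵀ * (W * Wᵀ) * U := by noncomm_ring
      _ = 1 := by rw [mul_eq_one_comm.mp hW, Matrix.mul_one, hU]
  have : Wᵀ * A = (Wᵀ * U) * S := by rw [hA]; noncomm_ring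
  rw [this]
  exact trace_orth_mul_psd_le hQ hSps

lemma exists_trace_eq_nuclearNorm {d : ℕ} (A : Matrix (Fin d) (Fin d) ℝ) :
    ∃ W : Matrix (Fin d) (Fin d) ℝ, Wᵀ * W = 1 ∧ (Wᵀ * A).trace = nuclearNorm A := by
  obtain ⟨U, hU, hA⟩ := exists_polar A
  refine ⟨U, hU, ?_⟩
  have h : Uᵀ * A = sqrtM A := by
    conv_lhs => rw [hA]
    rw [← Matrix.mul_assoc, hU, Matrix.one_mul]
  rw [h]; rfl

lemma perm_orth {N : ℕ} (σ : Equiv.Perm (Fin N)) :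
    (σ.permMatrix ℝ)ᵀ * σ.permMatrix ℝ = 1 := by
  unfold Equiv.Perm.permMatrix
  rw [← PEquiv.toMatrix_symm, ← PEquiv.toMatrix_trans, ← Equiv.toPEquiv_symm,
    ← Equiv.toPEquiv_trans]
  simp

lemma frob_expand {N d : ℕ} (X Y : Matrix (Fin N) (Fin d) ℝ)
    (P : Matrix (Fin N) (Fin N) ℝ) (W : Matrix (Fin d) (Fin d) ℝ)
    (hP : Pᵀ * P = 1) (hW : Wᵀ * W = 1) :
    frobSq (X * W - P * Y) = frobSq X + frobSq Y - 2 * (Wᵀ * (Xᵀ * P * Y)).trace := by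
  have e1 : (X * W - P * Y)ᵀ * (X * W - P * Y)
      = Wᵀ * Xᵀ * (X * W) - Wᵀ * Xᵀ * (P * Y) - Yᵀ * Pᵀ * (X * W) + Yᵀ * Pᵀ * (P * Y) := by
    rw [Matrix.transpose_sub, Matrix.transpose_mul, Matrix.transpose_mul,
      Matrix.sub_mul, Matrix.mul_sub, Matrix.mul_sub]
    abel
  rw [frobSq, frobSq, frobSq, e1, Matrix.trace_add, Matrix.trace_sub, Matrix.trace_sub]
  have t1 : (Wᵀ * Xᵀ * (X * W)).trace = (Xᵀ * X).trace := by
    rw [show Wᵀ * Xᵀ * (X * W) = Wᵀ * (Xᵀ * X) * W from by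
        simp only [Matrix.mul_assoc],
      Matrix.trace_mul_cycle, ← Matrix.mul_assoc, mul_eq_one_comm.mp hW,
      Matrix.one_mul]
  have t4 : (Yᵀ * Pᵀ * (P * Y)).trace = (Yᵀ * Y).trace := by
    rw [show Yᵀ * Pᵀ * (P * Y) = Yᵀ * ((Pᵀ * P) * Y) from by
        simp only [Matrix.mul_assoc], hP, Matrix.one_mul]
  have t2 : (Wᵀ * Xᵀ * (P * Y)).trace = (Wᵀ * (Xᵀ * P * Y)).trace := by
    congr 1; simp only [Matrix.mul_assoc]
  have t3 : (Yᵀ * Pᵀ * (X * W)).trace = (Wᵀ * (Xᵀ * P * Y)).trace := by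
    rw [← Matrix.trace_transpose (Yᵀ * Pᵀ * (X * W))]
    congr 1
    simp [Matrix.transpose_mul, Matrix.mul_assoc]
  rw [t1, t2, t3, t4]
  ring


/-- Proposition 1, value form: the minimum of `‖XW − PY‖_F²` over permutation
matrices `P` and orthogonal matrices `W` equals `‖X‖_F² + ‖Y‖_F² − 2 · max_P ‖Xᵀ P Y‖_*`. -/
theorem stmt5 {N d : ℕ} (X Y : Matrix (Fin N) (Fin d) ℝ) :
    ∃ M : ℝ,
      IsGreatest {v : ℝ | ∃ P : Matrix (Fin N) (Fin N) ℝ,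
        IsPermMatrix P ∧ v = nuclearNorm (Xᵀ * P * Y)} M ∧
      IsLeast {v : ℝ | ∃ (P : Matrix (Fin N) (Fin N) ℝ) (W : Matrix (Fin d) (Fin d) ℝ),
        IsPermMatrix P ∧ Wᵀ * W = 1 ∧ v = frobSq (X * W - P * Y)}
        (frobSq X + frobSq Y - 2 * M) := by
  obtain ⟨σ₀, hσ₀⟩ := Finite.exists_max
    (fun σ : Equiv.Perm (Fin N) => nuclearNorm (Xᵀ * σ.permMatrix ℝ * Y))
  refine ⟨nuclearNorm (Xᵀ * σ₀.permMatrix ℝ * Y), ⟨⟨σ₀.permMatrix ℝ, ⟨σ₀, rfl⟩, rfl⟩, ?_⟩,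
    ?_, ?_⟩
  · rintro v ⟨P, ⟨σ, rfl⟩, rfl⟩
    exact hσ₀ σ
  · obtain ⟨W, hW, hWtr⟩ := exists_trace_eq_nuclearNorm (Xᵀ * σ₀.permMatrix ℝ * Y)
    refine ⟨σ₀.permMatrix ℝ, W, ⟨σ₀, rfl⟩, hW, ?_⟩
    rw [frob_expand X Y _ W (perm_orth σ₀) hW, hWtr]
  · rintro v ⟨P, W, ⟨σ, rfl⟩, hW, rfl⟩
    rw [frob_expand X Y _ W (perm_orth σ) hW]
    have h1 := trace_le_nuclearNorm (Xᵀ * σ.permMatrix ℝ * Y) W hW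
    have h2 := hσ₀ σ
    linarith
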